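/- Let a < b be real numbers, V : ℝ → ℝ continuous, and E ∈ ℝ. Let F : [a,b] → ℝ be continuously differentiable with F > 0 and F' absolutely continuous, and let φ : [a,b] → ℝ be continuously differentiable with φ' absolutely continuous. Then ∫_a^b F(x)φ(x)·( −(φ/F)''(x) + (V(x)−E)·(φ(x)/F(x)) ) dx = F(a)φ(a)(φ/F)'(a) − F(b)φ(b)(φ/F)'(b) + ∫_a^b ( (φ'(x))² + ( V(x) − E − (F'(x)/F(x))² )·(φ(x))² ) dx. -/

import Mathlib

open MeasureTheory Set

/-- `f` is continuously differentiable on `[a,b]` with absolutely continuous derivative: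
its derivative `deriv f` is continuous there and is the indefinite integral of its own
(almost everywhere) derivative `deriv (deriv f)`, which is Lebesgue integrable. -/
def C1WithACDeriv (f : ℝ → ℝ) (a b : ℝ) : Prop :=
  (∀ x ∈ Set.Icc a b, DifferentiableAt ℝ f x) ∧
  ContinuousOn (deriv f) (Set.Icc a b) ∧
  IntegrableOn (deriv (deriv f)) (Set.Icc a b) ∧
  ∀ x ∈ Set.Icc a b, deriv f x = deriv f a + ∫ t in a..x, deriv (deriv f) t

open MeasureTheory Set Metric Filter intervalIntegral
open scoped Interval

lemma ae_hasDerivAt_primitive {a b : ℝ} {f : ℝ → ℝ} (hf : IntegrableOn f (Icc a b)) :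
    ∀ᵐ x, x ∈ Ioo a b → HasDerivAt (fun y => ∫ t in a..y, f t) (f x) x := by
  set f' : ℝ → ℝ := (Icc a b).indicator f with hf'
  have hint : Integrable f' volume := (integrable_indicator_iff measurableSet_Icc).2 hf
  have hloc : LocallyIntegrable f' volume := hint.locallyIntegrable
  filter_upwards [(Besicovitch.vitaliFamily (volume : Measure ℝ)).ae_tendsto_average_norm_sub hloc]
    with x hx hxI
  have hx' : Tendsto (fun r => ⨍ y in closedBall x r, ‖f' y - f' x‖) (nhdsWithin 0 (Ioi 0))
      (nhds 0) := hx.comp (Besicovitch.tendsto_filterAt volume x)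
  rw [hasDerivAt_iff_tendsto_slope, tendsto_iff_norm_sub_tendsto_zero]
  set ε := min (x - a) (b - x) with hε
  have hεpos : 0 < ε := lt_min (by linarith [hxI.1]) (by linarith [hxI.2])
  have key : ∀ᶠ y in nhdsWithin x {x}ᶜ,
      ‖slope (fun y => ∫ t in a..y, f t) x y - f x‖
        ≤ 2 * ⨍ z in closedBall x |y - x|, ‖f' z - f' x‖ := by
    have hmem : ∀ᶠ y in nhdsWithin x {x}ᶜ, |y - x| < ε := by
      have h : ∀ᶠ y in nhds x, |y - x| < ε := by
        filter_upwards [Metric.ball_mem_nhds x hεpos] with y hy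
        simpa [Real.dist_eq] using hy
      exact h.filter_mono nhdsWithin_le_nhds
    filter_upwards [hmem, self_mem_nhdsWithin] with y hy hyne
    have hyx : (y : ℝ) ≠ x := hyne
    have hay : a < y := by
      have h1 : x - ε < y := by have := (abs_lt.1 hy).1; linarith
      have h2 : ε ≤ x - a := hε ▸ min_le_left (x - a) (b - x)
      linarith
    have hyb : y < b := by
      have h1 : y < x + ε := by have := (abs_lt.1 hy).2; linarith
      have h2 : ε ≤ b - x := hε ▸ min_le_right (x - a) (b - x)
      linarith
    have hsub : uIcc x y ⊆ Icc a b :=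
      uIcc_subset_Icc ⟨hxI.1.le, hxI.2.le⟩ ⟨hay.le, hyb.le⟩
    have hix : IntervalIntegrable f volume a x := by
      rw [intervalIntegrable_iff_integrableOn_Ioc_of_le hxI.1.le]
      exact hf.mono_set (Ioc_subset_Icc_self.trans (Icc_subset_Icc le_rfl hxI.2.le))
    have hiy : IntervalIntegrable f volume a y := by
      rw [intervalIntegrable_iff_integrableOn_Ioc_of_le hay.le]
      exact hf.mono_set (Ioc_subset_Icc_self.trans (Icc_subset_Icc le_rfl hyb.le))
    have hixy : IntervalIntegrable f volume x y := hix.symm.trans hiy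
    have hgg : (∫ t in a..y, f t) - ∫ t in a..x, f t = ∫ t in x..y, f t :=
      integral_interval_sub_left hiy hix
    have hslope : slope (fun y => ∫ t in a..y, f t) x y - f x
        = (y - x)⁻¹ • (∫ t in x..y, (f t - f x)) := by
      rw [slope_def_field]
      rw [div_eq_inv_mul]
      rw [intervalIntegral.integral_sub hixy (intervalIntegrable_const)]
      rw [intervalIntegral.integral_const, hgg]
      have hne : y - x ≠ 0 := sub_ne_zero.2 hyx
      simp only [smul_eq_mul]
      field_simp
    rw [hslope]
    rw [norm_smul]
    have h1 : ‖∫ t in x..y, (f t - f x)‖ ≤ ∫ t in Ι x y, ‖f t - f x‖ :=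
      intervalIntegral.norm_integral_le_integral_norm_uIoc
    have h2 : ∫ t in Ι x y, ‖f t - f x‖ = ∫ t in Ι x y, ‖f' t - f' x‖ := by
      apply setIntegral_congr_fun measurableSet_uIoc
      intro t ht
      have htI : t ∈ Icc a b := hsub (uIoc_subset_uIcc ht)
      have hxI' : x ∈ Icc a b := ⟨hxI.1.le, hxI.2.le⟩
      simp [hf', indicator_of_mem htI, indicator_of_mem hxI']
    have hbig : IntegrableOn (fun t => ‖f' t - f' x‖) (closedBall x |y - x|) volume := by
      exact Integrable.norm
        (hint.integrableOn.sub (integrableOn_const measure_closedBall_lt_top.ne))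
    have h3 : ∫ t in Ι x y, ‖f' t - f' x‖ ≤ ∫ t in closedBall x |y - x|, ‖f' t - f' x‖ := by
      apply setIntegral_mono_set hbig
      · filter_upwards with t using norm_nonneg _
      · apply HasSubset.Subset.eventuallyLE
        intro t ht
        rw [Real.closedBall_eq_Icc]
        rcases le_total x y with h | h
        · rw [uIoc_of_le h] at ht
          rw [abs_of_nonneg (by linarith)]
          exact ⟨by linarith [ht.1.le], by linarith [ht.2]⟩
        · rw [uIoc_of_ge h] at ht
          rw [abs_of_nonpos (by linarith)]
          exact ⟨by linarith [ht.1.le, ht.2], by linarith [ht.1.le, ht.2]⟩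
    have hcb : (volume (closedBall x |y - x|)).toReal = 2 * |y - x| := by
      rw [Real.volume_closedBall, ENNReal.toReal_ofReal (by positivity)]
    have h4 : ∫ t in closedBall x |y - x|, ‖f' t - f' x‖
        = 2 * |y - x| * ⨍ z in closedBall x |y - x|, ‖f' z - f' x‖ := by
      rw [setAverage_eq, smul_eq_mul, measureReal_def, hcb]
      rw [← mul_assoc, mul_inv_cancel₀ (by have h5 : |y - x| ≠ 0 := abs_ne_zero.2 (sub_ne_zero.2 hyx); positivity), one_mul]
    calc ‖(y - x)⁻¹‖ * ‖∫ t in x..y, (f t - f x)‖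
        ≤ ‖(y - x)⁻¹‖ * (2 * |y - x| * ⨍ z in closedBall x |y - x|, ‖f' z - f' x‖) := by
          apply mul_le_mul_of_nonneg_left _ (norm_nonneg _)
          rw [← h4]; exact h1.trans (h2.le.trans h3)
      _ = 2 * ⨍ z in closedBall x |y - x|, ‖f' z - f' x‖ := by
          rw [Real.norm_eq_abs, abs_inv]
          have : |y - x| ≠ 0 := abs_ne_zero.2 (sub_ne_zero.2 hyx)
          field_simp
  have htend : Tendsto (fun y => 2 * ⨍ z in closedBall x |y - x|, ‖f' z - f' x‖)
      (nhdsWithin x {x}ᶜ) (nhds 0) := by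
    have habs : Tendsto (fun y : ℝ => |y - x|) (nhdsWithin x {x}ᶜ) (nhdsWithin 0 (Ioi 0)) := by
      apply tendsto_nhdsWithin_iff.2
      constructor
      · have hc : Continuous (fun y : ℝ => |y - x|) := by fun_prop
        have : Tendsto (fun y : ℝ => |y - x|) (nhds x) (nhds 0) := by
          simpa using hc.tendsto x
        exact this.mono_left nhdsWithin_le_nhds
      · filter_upwards [self_mem_nhdsWithin] with y hy
        exact abs_pos.2 (sub_ne_zero.2 hy)
    have := (hx'.comp habs).const_mul (2 : ℝ)
    simpa using this
  exact squeeze_zero' (by filter_upwards with y using norm_nonneg _) key htend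

lemma fubini_core {a c : ℝ} {f g : ℝ → ℝ}
    (hf : IntegrableOn f (Ioc a c)) (hg : IntegrableOn g (Ioc a c)) :
    ∫ t in Ioc a c, (∫ s in Ioc a t, f s) * g t
      = (∫ s in Ioc a c, f s) * (∫ t in Ioc a c, g t)
        - ∫ s in Ioc a c, f s * ∫ t in Ioc a s, g t := by
  set μ := (volume : Measure ℝ).restrict (Ioc a c) with hμ
  set k : ℝ → ℝ → ℝ := fun t s => if s ≤ t then g t * f s else 0 with hk
  have hinter : ∀ t ∈ Ioc a c, Iic t ∩ Ioc a c = Ioc a t := by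
    intro t ht
    ext s
    simp only [mem_inter_iff, mem_Iic, mem_Ioc]
    exact ⟨fun h => ⟨h.2.1, h.1⟩, fun h => ⟨h.2, h.1, h.2.trans ht.2⟩⟩
  have hinter2 : ∀ s ∈ Ioc a c, Ici s ∩ Ioc a c = Icc s c := by
    intro s hs
    ext t
    simp only [mem_inter_iff, mem_Ici, mem_Ioc, mem_Icc]
    exact ⟨fun h => ⟨h.1, h.2.2⟩, fun h => ⟨h.1, hs.1.trans_le h.1, h.2⟩⟩
  have hkint : Integrable (Function.uncurry k) (μ.prod μ) := by
    have heq : Function.uncurry k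
        = {p : ℝ × ℝ | p.2 ≤ p.1}.indicator (fun p => g p.1 * f p.2) := by
      ext p
      simp only [Function.uncurry, hk, Set.indicator_apply, mem_setOf_eq]
    rw [heq]
    exact (Integrable.mul_prod hg hf).indicator
      (isClosed_le continuous_snd continuous_fst).measurableSet
  have swap : ∫ t, ∫ s, k t s ∂μ ∂μ = ∫ s, ∫ t, k t s ∂μ ∂μ :=
    MeasureTheory.integral_integral_swap hkint
  have lhs_eq : ∫ t in Ioc a c, (∫ s in Ioc a t, f s) * g t = ∫ t, ∫ s, k t s ∂μ ∂μ := by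
    rw [hμ]
    apply setIntegral_congr_fun measurableSet_Ioc
    intro t ht
    have : ∀ s, k t s = (Iic t).indicator f s * g t := by
      intro s
      simp only [hk, Set.indicator_apply, mem_Iic]
      split <;> ring
    simp_rw [this]
    rw [MeasureTheory.integral_mul_const, MeasureTheory.integral_indicator measurableSet_Iic,
      Measure.restrict_restrict measurableSet_Iic, hinter t ht]
  have rhs_eq : ∫ s, ∫ t, k t s ∂μ ∂μ
      = (∫ t in Ioc a c, g t) * (∫ s in Ioc a c, f s)
        - ∫ s in Ioc a c, f s * ∫ t in Ioc a s, g t := by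
    have step1 : ∫ s, ∫ t, k t s ∂μ ∂μ
        = ∫ s in Ioc a c, (f s * ((∫ t in Ioc a c, g t) - ∫ t in Ioc a s, g t)) := by
      rw [hμ]
      apply setIntegral_congr_fun measurableSet_Ioc
      intro s hs
      have : ∀ t, k t s = (Ici s).indicator g t * f s := by
        intro t
        simp only [hk, Set.indicator_apply, mem_Ici]
        split <;> ring
      simp_rw [this]
      rw [MeasureTheory.integral_mul_const, MeasureTheory.integral_indicator measurableSet_Ici,
        Measure.restrict_restrict measurableSet_Ici, hinter2 s hs]
      have hsplit : (∫ t in Ioc a s, g t) + ∫ t in Ioc s c, g t = ∫ t in Ioc a c, g t := by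
        rw [← MeasureTheory.setIntegral_union (Set.Ioc_disjoint_Ioc_of_le le_rfl) measurableSet_Ioc
          (hg.mono_set (Ioc_subset_Ioc le_rfl hs.2)) (hg.mono_set (Ioc_subset_Ioc hs.1.le le_rfl)),
          Ioc_union_Ioc_eq_Ioc hs.1.le hs.2]
      rw [MeasureTheory.integral_Icc_eq_integral_Ioc]
      rw [show (∫ t in Ioc s c, g t) = (∫ t in Ioc a c, g t) - ∫ t in Ioc a s, g t by
        linarith [hsplit] ]
      ring
    rw [step1]
    have hΓcont : ContinuousOn (fun s => ∫ t in Ioc a s, g t) (Icc a c) := by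
      apply intervalIntegral.continuousOn_primitive
      rwa [integrableOn_Icc_iff_integrableOn_Ioc]
    have hfΓ : IntegrableOn (fun s => f s * ∫ t in Ioc a s, g t) (Ioc a c) := by
      apply IntegrableOn.mono_set _ Ioc_subset_Icc_self
      apply IntegrableOn.mul_continuousOn _ hΓcont isCompact_Icc
      rwa [integrableOn_Icc_iff_integrableOn_Ioc]
    have : ∫ s in Ioc a c, (f s * ((∫ t in Ioc a c, g t) - ∫ t in Ioc a s, g t))
        = ∫ s in Ioc a c, (f s * (∫ t in Ioc a c, g t) - f s * ∫ t in Ioc a s, g t) := by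
      congr 1; ext s; ring
    rw [this, MeasureTheory.integral_sub (hf.mul_const _) hfΓ,
      MeasureTheory.integral_mul_const]
    ring
  rw [lhs_eq, swap, rhs_eq]
  ring

/-- `w` is an indefinite integral of `dw` on `[a,b]`. -/
def ACRep (a b : ℝ) (w dw : ℝ → ℝ) : Prop :=
  IntegrableOn dw (Icc a b) volume ∧ ∀ x ∈ Icc a b, w x = w a + ∫ t in a..x, dw t

lemma ACRep.continuousOn {a b : ℝ} {w dw : ℝ → ℝ} (h : ACRep a b w dw) :
    ContinuousOn w (Icc a b) := by
  apply ContinuousOn.congr ((continuousOn_const (c := w a)).add (continuousOn_primitive h.1))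
  intro x hx
  rw [h.2 x hx, intervalIntegral.integral_of_le hx.1]
  rfl

lemma ACRep.mul {a b : ℝ} {u v du dv : ℝ → ℝ} (hu : ACRep a b u du) (hv : ACRep a b v dv) :
    ACRep a b (fun x => u x * v x) (fun x => u x * dv x + du x * v x) := by
  have hucont := hu.continuousOn
  have hvcont := hv.continuousOn
  have hint : IntegrableOn (fun x => u x * dv x + du x * v x) (Icc a b) volume :=
    (IntegrableOn.continuousOn_mul hucont hv.1 isCompact_Icc).add
      (IntegrableOn.mul_continuousOn hu.1 hvcont isCompact_Icc)
  refine ⟨hint, fun x hx => ?_⟩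
  dsimp only
  have hax : a ≤ x := hx.1
  have hIccsub : Icc a x ⊆ Icc a b := Icc_subset_Icc le_rfl hx.2
  have hIocsub : Ioc a x ⊆ Icc a b := Ioc_subset_Icc_self.trans hIccsub
  have hfi : IntegrableOn du (Ioc a x) volume := hu.1.mono_set hIocsub
  have hgi : IntegrableOn dv (Ioc a x) volume := hv.1.mono_set hIocsub
  have core := fubini_core hfi hgi
  -- rewrite the target integral
  rw [intervalIntegral.integral_of_le hax]
  have hrepr : ∀ t ∈ Ioc a x, u t = u a + ∫ s in Ioc a t, du s := by
    intro t ht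
    rw [hu.2 t (hIocsub ht), intervalIntegral.integral_of_le ht.1.le]
  have hrepr' : ∀ t ∈ Ioc a x, v t = v a + ∫ s in Ioc a t, dv s := by
    intro t ht
    rw [hv.2 t (hIocsub ht), intervalIntegral.integral_of_le ht.1.le]
  have step : ∫ t in Ioc a x, (u t * dv t + du t * v t)
      = ∫ t in Ioc a x, ((u a + ∫ s in Ioc a t, du s) * dv t
          + du t * (v a + ∫ s in Ioc a t, dv s)) := by
    apply setIntegral_congr_fun measurableSet_Ioc
    intro t ht
    dsimp only
    rw [hrepr t ht, hrepr' t ht]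
  have hΦcont : ContinuousOn (fun t => ∫ s in Ioc a t, du s) (Icc a x) :=
    continuousOn_primitive (hu.1.mono_set (Icc_subset_Icc le_rfl hx.2))
  have hΓcont : ContinuousOn (fun t => ∫ s in Ioc a t, dv s) (Icc a x) :=
    continuousOn_primitive (hv.1.mono_set (Icc_subset_Icc le_rfl hx.2))
  have int0 : IntegrableOn (fun t => (∫ s in Ioc a t, du s) * dv t) (Ioc a x) :=
    IntegrableOn.mono_set
      (IntegrableOn.continuousOn_mul hΦcont (hv.1.mono_set hIccsub) isCompact_Icc)
      Ioc_subset_Icc_self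
  have int0' : IntegrableOn (fun t => du t * ∫ s in Ioc a t, dv s) (Ioc a x) :=
    IntegrableOn.mono_set
      (IntegrableOn.mul_continuousOn (hu.1.mono_set hIccsub) hΓcont isCompact_Icc)
      Ioc_subset_Icc_self
  have int1 : IntegrableOn (fun t => (u a + ∫ s in Ioc a t, du s) * dv t) (Ioc a x) :=
    IntegrableOn.mono_set
      (IntegrableOn.continuousOn_mul (continuousOn_const.add hΦcont)
        (hv.1.mono_set hIccsub) isCompact_Icc)
      Ioc_subset_Icc_self
  have int2 : IntegrableOn (fun t => du t * (v a + ∫ s in Ioc a t, dv s)) (Ioc a x) :=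
    IntegrableOn.mono_set
      (IntegrableOn.mul_continuousOn (hu.1.mono_set hIccsub)
        (continuousOn_const.add hΓcont) isCompact_Icc)
      Ioc_subset_Icc_self
  rw [step]
  have expand : ∫ t in Ioc a x, ((u a + ∫ s in Ioc a t, du s) * dv t
        + du t * (v a + ∫ s in Ioc a t, dv s))
      = (∫ t in Ioc a x, (u a + ∫ s in Ioc a t, du s) * dv t)
        + ∫ t in Ioc a x, du t * (v a + ∫ s in Ioc a t, dv s) :=
    MeasureTheory.integral_add int1 int2
  have e1 : ∫ t in Ioc a x, (u a + ∫ s in Ioc a t, du s) * dv t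
      = u a * (∫ t in Ioc a x, dv t) + ∫ t in Ioc a x, (∫ s in Ioc a t, du s) * dv t := by
    have : ∀ t, (u a + ∫ s in Ioc a t, du s) * dv t
        = u a * dv t + (∫ s in Ioc a t, du s) * dv t := fun t => by ring
    simp_rw [this]
    rw [MeasureTheory.integral_add (hgi.const_mul _) int0, MeasureTheory.integral_const_mul]
  have e2 : ∫ t in Ioc a x, du t * (v a + ∫ s in Ioc a t, dv s)
      = v a * (∫ t in Ioc a x, du t) + ∫ t in Ioc a x, du t * ∫ s in Ioc a t, dv s := by
    have : ∀ t, du t * (v a + ∫ s in Ioc a t, dv s)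
        = du t * v a + du t * ∫ s in Ioc a t, dv s := fun t => by ring
    simp_rw [this]
    rw [MeasureTheory.integral_add (hfi.mul_const _) int0']
    rw [MeasureTheory.integral_mul_const]
    ring
  rw [expand, e1, e2, core]
  rw [hu.2 x hx, hv.2 x hx, intervalIntegral.integral_of_le hax,
    intervalIntegral.integral_of_le hax]
  ring

lemma ACRep.sub {a b : ℝ} {u v du dv : ℝ → ℝ} (hu : ACRep a b u du) (hv : ACRep a b v dv) :
    ACRep a b (fun x => u x - v x) (fun x => du x - dv x) := by
  refine ⟨hu.1.sub hv.1, fun x hx => ?_⟩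
  have h1 : IntervalIntegrable du volume a x := by
    rw [intervalIntegrable_iff_integrableOn_Ioc_of_le hx.1]
    exact hu.1.mono_set (Ioc_subset_Icc_self.trans (Icc_subset_Icc le_rfl hx.2))
  have h2 : IntervalIntegrable dv volume a x := by
    rw [intervalIntegrable_iff_integrableOn_Ioc_of_le hx.1]
    exact hv.1.mono_set (Ioc_subset_Icc_self.trans (Icc_subset_Icc le_rfl hx.2))
  rw [intervalIntegral.integral_sub h1 h2]
  dsimp only
  rw [hu.2 x hx, hv.2 x hx]
  ring

lemma acRep_of_hasDerivAt {a b : ℝ} (hab : a ≤ b) {w dw : ℝ → ℝ}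
    (hd : ∀ x ∈ Icc a b, HasDerivAt w (dw x) x) (hc : ContinuousOn dw (Icc a b)) :
    ACRep a b w dw := by
  refine ⟨hc.integrableOn_Icc, fun x hx => ?_⟩
  have hsub : uIcc a x ⊆ Icc a b := by
    rw [uIcc_of_le hx.1]
    exact Icc_subset_Icc le_rfl hx.2
  rw [intervalIntegral.integral_eq_sub_of_hasDerivAt (fun t ht => hd t (hsub ht))
    ((hc.mono hsub).intervalIntegrable)]
  ring


/-- Integration-by-parts identity (Lemma 3.1, second part) on a single edge `[a,b]`:
for `F > 0` and `φ`, both `C¹` with absolutely continuous derivative,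
`∫_a^b Fφ·(−(φ/F)'' + (V−E)·(φ/F)) = F(a)φ(a)(φ/F)'(a) − F(b)φ(b)(φ/F)'(b)
  + ∫_a^b ((φ')² + (V−E−(F'/F)²)·φ²)`. -/
theorem agmon_integration_by_parts (a b : ℝ) (hab : a < b) (V : ℝ → ℝ)
    (hV : Continuous V) (E : ℝ) (F φ : ℝ → ℝ)
    (hF : C1WithACDeriv F a b) (hFpos : ∀ x ∈ Set.Icc a b, 0 < F x)
    (hφ : C1WithACDeriv φ a b) :
    ∫ x in a..b,
        F x * φ x *
          (-(deriv (deriv (fun y => φ y / F y)) x) + (V x - E) * (φ x / F x))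
      = F a * φ a * deriv (fun y => φ y / F y) a
        - F b * φ b * deriv (fun y => φ y / F y) b
        + ∫ x in a..b,
            ((deriv φ x) ^ 2 + (V x - E - (deriv F x / F x) ^ 2) * (φ x) ^ 2) := by
  obtain ⟨hFd, hFc, hFi, hFrep⟩ := hF
  obtain ⟨hpd, hpc, hpi, hprep⟩ := hφ
  have hFne : ∀ x ∈ Icc a b, F x ≠ 0 := fun x hx => (hFpos x hx).ne'
  have hFcont : ContinuousOn F (Icc a b) :=
    fun x hx => (hFd x hx).continuousAt.continuousWithinAt
  have hpcont : ContinuousOn φ (Icc a b) :=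
    fun x hx => (hpd x hx).continuousAt.continuousWithinAt
  -- abbreviations (purely notational)
  have repφ' : ACRep a b (deriv φ) (deriv (deriv φ)) := ⟨hpi, hprep⟩
  have repF' : ACRep a b (deriv F) (deriv (deriv F)) := ⟨hFi, hFrep⟩
  have repφ : ACRep a b φ (deriv φ) :=
    acRep_of_hasDerivAt hab.le (fun x hx => (hpd x hx).hasDerivAt) hpc
  have repF : ACRep a b F (deriv F) :=
    acRep_of_hasDerivAt hab.le (fun x hx => (hFd x hx).hasDerivAt) hFc
  have hPd : ∀ x ∈ Icc a b, HasDerivAt (fun y => (F y)⁻¹) (-(deriv F x) / F x ^ 2) x :=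
    fun x hx => (hFd x hx).hasDerivAt.inv (hFne x hx)
  have hPc : ContinuousOn (fun x => -(deriv F x) / F x ^ 2) (Icc a b) :=
    (hFc.neg.div ((hFcont.pow 2)) (fun x hx => pow_ne_zero _ (hFne x hx)))
  have repP : ACRep a b (fun y => (F y)⁻¹) (fun x => -(deriv F x) / F x ^ 2) :=
    acRep_of_hasDerivAt hab.le hPd hPc
  -- product chain
  have repC : ACRep a b (fun x => deriv φ x * F x - φ x * deriv F x)
      (fun x => (deriv φ x * deriv F x + deriv (deriv φ) x * F x)
        - (φ x * deriv (deriv F) x + deriv φ x * deriv F x)) :=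
    (repφ'.mul repF).sub (repφ.mul repF')
  have repg : ACRep a b
      (fun x => (deriv φ x * F x - φ x * deriv F x) * (F x)⁻¹ * (F x)⁻¹)
      (fun x =>
        ((deriv φ x * F x - φ x * deriv F x) * (F x)⁻¹) * (-(deriv F x) / F x ^ 2)
        + ((deriv φ x * F x - φ x * deriv F x) * (-(deriv F x) / F x ^ 2)
            + ((deriv φ x * deriv F x + deriv (deriv φ) x * F x)
                - (φ x * deriv (deriv F) x + deriv φ x * deriv F x)) * (F x)⁻¹)
          * (F x)⁻¹) :=
    (repC.mul repP).mul repP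
  set g : ℝ → ℝ := fun x => (deriv φ x * F x - φ x * deriv F x) * (F x)⁻¹ * (F x)⁻¹ with hgdef
  set q : ℝ → ℝ := fun x =>
        ((deriv φ x * F x - φ x * deriv F x) * (F x)⁻¹) * (-(deriv F x) / F x ^ 2)
        + ((deriv φ x * F x - φ x * deriv F x) * (-(deriv F x) / F x ^ 2)
            + ((deriv φ x * deriv F x + deriv (deriv φ) x * F x)
                - (φ x * deriv (deriv F) x + deriv φ x * deriv F x)) * (F x)⁻¹)
          * (F x)⁻¹ with hqdef
  have repG : ACRep a b (fun x => (F x * φ x) * g x)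
      (fun x => (F x * φ x) * q x + (F x * deriv φ x + deriv F x * φ x) * g x) :=
    (repF.mul repφ).mul repg
  -- derivative of u = φ/F on Icc
  have hgderiv : ∀ x ∈ Icc a b, HasDerivAt (fun y => φ y / F y) (g x) x := by
    intro x hx
    have hd := (hpd x hx).hasDerivAt.fun_div (hFd x hx).hasDerivAt (hFne x hx)
    exact hd.congr_deriv (by rw [div_eq_mul_inv, pow_two, mul_inv, ← mul_assoc])
  have hderiv_u_eq : ∀ x ∈ Icc a b, deriv (fun y => φ y / F y) x = g x :=
    fun x hx => (hgderiv x hx).deriv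
  -- a.e. second derivative of u
  have hFae := ae_hasDerivAt_primitive hFi
  have hpae := ae_hasDerivAt_primitive hpi
  have key_ae : ∀ᵐ x, x ∈ Ioo a b → deriv (deriv (fun y => φ y / F y)) x = q x := by
    filter_upwards [hFae, hpae] with x hxF hxφ hx
    have hxIcc : x ∈ Icc a b := Ioo_subset_Icc_self hx
    have hIoo_nhds : Ioo a b ∈ nhds x := isOpen_Ioo.mem_nhds hx
    have hF'x : HasDerivAt (deriv F) (deriv (deriv F) x) x := by
      apply HasDerivAt.congr_of_eventuallyEq ((hxF hx).const_add (deriv F a))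
      filter_upwards [hIoo_nhds] with y hy
      exact hFrep y (Ioo_subset_Icc_self hy)
    have hφ'x : HasDerivAt (deriv φ) (deriv (deriv φ) x) x := by
      apply HasDerivAt.congr_of_eventuallyEq ((hxφ hx).const_add (deriv φ a))
      filter_upwards [hIoo_nhds] with y hy
      exact hprep y (Ioo_subset_Icc_self hy)
    have hgx : HasDerivAt g (q x) x := by
      have hC : HasDerivAt (fun y => deriv φ y * F y - φ y * deriv F y)
          ((deriv φ x * deriv F x + deriv (deriv φ) x * F x)
            - (φ x * deriv (deriv F) x + deriv φ x * deriv F x)) x := by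
        have h1 := hφ'x.fun_mul (hFd x hxIcc).hasDerivAt
        have h2 := (hpd x hxIcc).hasDerivAt.fun_mul hF'x
        exact (h1.sub h2).congr_deriv (by ring)
      have hP := hPd x hxIcc
      have := (hC.fun_mul hP).fun_mul hP
      exact this.congr_deriv (by rw [hqdef]; ring)
    have hequ : deriv (fun y => φ y / F y) =ᶠ[nhds x] g := by
      filter_upwards [hIoo_nhds] with y hy
      exact hderiv_u_eq y (Ioo_subset_Icc_self hy)
    rw [Filter.EventuallyEq.deriv_eq hequ]
    exact hgx.deriv
  -- a.e. x ≠ b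
  have hne_b : ∀ᵐ x : ℝ ∂(volume : Measure ℝ), x ≠ b := by
    rw [ae_iff]
    have : {x : ℝ | ¬ x ≠ b} = {b} := by ext y; simp
    rw [this]
    exact measure_singleton b
  -- rewrite the LHS integrand a.e.
  have integrand_ae : ∀ᵐ x, x ∈ Ι a b →
      F x * φ x * (-(deriv (deriv (fun y => φ y / F y)) x) + (V x - E) * (φ x / F x))
        = ((deriv φ x) ^ 2 + (V x - E - (deriv F x / F x) ^ 2) * (φ x) ^ 2)
          - ((F x * φ x) * q x + (F x * deriv φ x + deriv F x * φ x) * g x) := by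
    filter_upwards [key_ae, hne_b] with x h1 h2 hx
    rw [uIoc_of_le hab.le] at hx
    have hxIoo : x ∈ Ioo a b := ⟨hx.1, lt_of_le_of_ne hx.2 h2⟩
    have hxIcc : x ∈ Icc a b := Ioo_subset_Icc_self hxIoo
    rw [h1 hxIoo, hqdef, hgdef]
    have hne := hFne x hxIcc
    field_simp
    ring
  rw [intervalIntegral.integral_congr_ae integrand_ae]
  -- split the integral
  have hXint : IntervalIntegrable
      (fun x => (deriv φ x) ^ 2 + (V x - E - (deriv F x / F x) ^ 2) * (φ x) ^ 2)
      volume a b := by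
    apply ContinuousOn.intervalIntegrable
    rw [uIcc_of_le hab.le]
    exact (hpc.pow 2).add
      (((hV.continuousOn.sub continuousOn_const).sub
        ((hFc.div hFcont (fun x hx => hFne x hx)).pow 2)).mul (hpcont.pow 2))
  have hdGint : IntervalIntegrable
      (fun x => (F x * φ x) * q x + (F x * deriv φ x + deriv F x * φ x) * g x)
      volume a b := by
    rw [intervalIntegrable_iff_integrableOn_Ioc_of_le hab.le]
    exact repG.1.mono_set Ioc_subset_Icc_self
  rw [intervalIntegral.integral_sub hXint hdGint]
  have hFTC : ∫ x in a..b, ((F x * φ x) * q x + (F x * deriv φ x + deriv F x * φ x) * g x)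
      = (F b * φ b) * g b - (F a * φ a) * g a := by
    have := repG.2 b ⟨hab.le, le_rfl⟩
    dsimp only at this
    linarith
  rw [hFTC, hderiv_u_eq a ⟨le_rfl, hab.le⟩, hderiv_u_eq b ⟨hab.le, le_rfl⟩]
  ring
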